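/- Let G be a graph with n vertices, m edges, energy E, largest eigenvalue λ₁ > 0 and minimal absolute eigenvalue t. Then E ≥ √(2mn) · √(4λ₁t/(λ₁+t)²). -/

import Mathlib

open Matrix

lemma sum_sq_eig {n : Type*} [Fintype n] [DecidableEq n] {A : Matrix n n ℝ}
    (hA : A.IsHermitian) : ∑ i, (hA.eigenvalues i)^2 = (A * A).trace := by
  set U := (hA.eigenvectorUnitary : Matrix n n ℝ)
  set D := Matrix.diagonal (RCLike.ofReal ∘ hA.eigenvalues : n → ℝ)
  have hsp : A = U * D * star U := hA.spectral_theorem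
  have hU : star U * U = 1 := Unitary.coe_star_mul_self hA.eigenvectorUnitary
  have : A * A = U * (D * D) * star U := by
    rw [hsp]
    calc U * D * star U * (U * D * star U) = U * D * (star U * U) * D * star U := by
          noncomm_ring
    _ = U * (D * D) * star U := by rw [hU]; noncomm_ring
  rw [this, Matrix.trace_mul_comm, ← Matrix.mul_assoc, hU, Matrix.one_mul]
  simp [D, Matrix.diagonal_mul_diagonal, Matrix.trace_diagonal, sq]

lemma rayleigh {n : Type*} [Fintype n] [DecidableEq n] {A : Matrix n n ℝ}
    (hA : A.IsHermitian) (w : n → ℝ) :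
    w ⬝ᵥ (A *ᵥ w) ≤ (⨆ i, hA.eigenvalues i) * (w ⬝ᵥ w) := by
  set U := (hA.eigenvectorUnitary : Matrix n n ℝ)
  set D := Matrix.diagonal (RCLike.ofReal ∘ hA.eigenvalues : n → ℝ)
  have hsp : A = U * D * star U := hA.spectral_theorem
  have hU : U * star U = 1 := Unitary.coe_mul_star_self hA.eigenvectorUnitary
  have hstar : star U = Uᵀ := by
    ext i j; simp [Matrix.star_apply]
  have h1 : w ⬝ᵥ (A *ᵥ w) = ∑ i, hA.eigenvalues i * ((w ᵥ* U) i)^2 := by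
    have e1 : w ⬝ᵥ (A *ᵥ w) = w ⬝ᵥ ((U * D * star U) *ᵥ w) :=
      congrArg (fun M => w ⬝ᵥ (M *ᵥ w)) hsp
    rw [e1, ← Matrix.mulVec_mulVec, ← Matrix.mulVec_mulVec, Matrix.dotProduct_mulVec,
      hstar, Matrix.mulVec_transpose]
    simp [D, Matrix.mulVec_diagonal, dotProduct]
    exact Finset.sum_congr rfl fun x _ => by ring
  have h2 : w ⬝ᵥ w = ∑ i, ((w ᵥ* U) i)^2 := by
    calc w ⬝ᵥ w = (w ᵥ* (U * star U)) ⬝ᵥ w := by rw [hU, Matrix.vecMul_one]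
    _ = ((w ᵥ* U) ᵥ* star U) ⬝ᵥ w := by rw [Matrix.vecMul_vecMul]
    _ = (w ᵥ* U) ⬝ᵥ (star U *ᵥ w) := by rw [Matrix.dotProduct_mulVec]
    _ = (w ᵥ* U) ⬝ᵥ (w ᵥ* U) := by rw [hstar, Matrix.mulVec_transpose]
    _ = ∑ i, ((w ᵥ* U) i)^2 := by simp [dotProduct, sq]
  rw [h1, h2, Finset.mul_sum]
  apply Finset.sum_le_sum
  intro i _
  exact mul_le_mul_of_nonneg_right (le_ciSup (Set.Finite.bddAbove (Set.finite_range _)) i)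
    (sq_nonneg _)

lemma abs_eig_le {V : Type*} [Fintype V] [DecidableEq V]
    (G : SimpleGraph V) [DecidableRel G.Adj]
    (hA : (G.adjMatrix ℝ).IsHermitian) (j : V) :
    |hA.eigenvalues j| ≤ ⨆ i, hA.eigenvalues i := by
  set A := G.adjMatrix ℝ
  set v : V → ℝ := ⇑(hA.eigenvectorBasis j) with hv
  have hAnn : ∀ i k, 0 ≤ A i k := by
    intro i k
    simp [A, SimpleGraph.adjMatrix_apply]
    split <;> norm_num
  have hnorm : v ⬝ᵥ v = 1 := by
    have := (hA.eigenvectorBasis).orthonormal.1 j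
    have h2 : inner ℝ (hA.eigenvectorBasis j) (hA.eigenvectorBasis j) = (1 : ℝ) := by
      rw [real_inner_self_eq_norm_sq, this]; norm_num
    rw [PiLp.inner_apply] at h2
    simpa [dotProduct, mul_comm, hv, ← sq] using h2
  have heig : v ⬝ᵥ (A *ᵥ v) = hA.eigenvalues j := by
    rw [hA.mulVec_eigenvectorBasis]
    simp only [dotProduct_smul, smul_eq_mul]
    rw [hnorm]; ring
  set w : V → ℝ := fun i => |v i| with hw
  have hwnorm : w ⬝ᵥ w = 1 := by
    simpa [hw, dotProduct, abs_mul_abs_self] using hnorm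
  have habs : |hA.eigenvalues j| ≤ w ⬝ᵥ (A *ᵥ w) := by
    rw [← heig]
    simp only [dotProduct, Matrix.mulVec]
    calc |∑ i, v i * ∑ k, A i k * v k| ≤ ∑ i, |v i * ∑ k, A i k * v k| :=
          Finset.abs_sum_le_sum_abs _ _
    _ ≤ ∑ i, w i * ∑ k, A i k * w k := by
        apply Finset.sum_le_sum
        intro i _
        rw [abs_mul]
        apply mul_le_mul_of_nonneg_left _ (abs_nonneg _)
        calc |∑ k, A i k * v k| ≤ ∑ k, |A i k * v k| := Finset.abs_sum_le_sum_abs _ _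
        _ = ∑ k, A i k * w k := by
            apply Finset.sum_congr rfl
            intro k _
            rw [abs_mul, abs_of_nonneg (hAnn i k)]
  calc |hA.eigenvalues j| ≤ w ⬝ᵥ (A *ᵥ w) := habs
  _ ≤ (⨆ i, hA.eigenvalues i) * (w ⬝ᵥ w) := rayleigh hA w
  _ = ⨆ i, hA.eigenvalues i := by rw [hwnorm, mul_one]

theorem energy_amgm_corollary {V : Type*} [Fintype V] [DecidableEq V] [Nonempty V]
    (G : SimpleGraph V) [DecidableRel G.Adj]
    (hA : (G.adjMatrix ℝ).IsHermitian)
    (hpos : 0 < ⨆ i, hA.eigenvalues i) :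
    (∑ i, |hA.eigenvalues i|) ≥
      Real.sqrt (2 * G.edgeFinset.card * Fintype.card V) *
      Real.sqrt (4 * (⨆ i, hA.eigenvalues i) * (⨅ i, |hA.eigenvalues i|) /
        ((⨆ i, hA.eigenvalues i) + (⨅ i, |hA.eigenvalues i|)) ^ 2) := by
  set l := ⨆ i, hA.eigenvalues i with hl
  set t := ⨅ i, |hA.eigenvalues i| with ht
  set E := ∑ i, |hA.eigenvalues i| with hE
  set n : ℝ := (Fintype.card V : ℝ) with hn
  set S : ℝ := (2 * G.edgeFinset.card : ℝ) with hS
  have ht0 : 0 ≤ t := le_ciInf fun i => abs_nonneg _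
  have hlt0 : 0 < l + t := by linarith
  have htle : ∀ i, t ≤ |hA.eigenvalues i| :=
    fun i => ciInf_le (Set.Finite.bddBelow (Set.finite_range _)) i
  have hlle : ∀ i, |hA.eigenvalues i| ≤ l := fun i => abs_eig_le G hA i
  -- sum of squares equals 2m
  have hsum : ∑ i, (hA.eigenvalues i)^2 = S := by
    rw [sum_sq_eig hA, hS, Matrix.trace]
    have : ∀ i, (G.adjMatrix ℝ * G.adjMatrix ℝ).diag i = (G.degree i : ℝ) := by
      intro i
      simpa using G.adjMatrix_mul_self_apply_self (α := ℝ) i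
    rw [Finset.sum_congr rfl (fun i _ => this i)]
    rw [← Nat.cast_sum, SimpleGraph.sum_degrees_eq_twice_card_edges]
    push_cast; ring
  -- key sum inequality
  have hkey : S + n * (l * t) ≤ (l + t) * E := by
    have hterm : ∀ i : V, (hA.eigenvalues i)^2 + l * t ≤ (l + t) * |hA.eigenvalues i| := by
      intro i
      have h1 := htle i
      have h2 := hlle i
      have h3 : 0 ≤ (l - |hA.eigenvalues i|) * (|hA.eigenvalues i| - t) :=
        mul_nonneg (by linarith) (by linarith)
      nlinarith [sq_abs (hA.eigenvalues i)]
    have h := Finset.sum_le_sum (fun i (_ : i ∈ Finset.univ) => hterm i)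
    rw [Finset.sum_add_distrib, Finset.sum_const, Finset.card_univ, nsmul_eq_mul,
      ← Finset.mul_sum, hsum] at h
    exact h
  have hS0 : 0 ≤ S := by positivity
  have hn0 : 0 ≤ n := by positivity
  -- AM-GM
  have hamgm : 2 * Real.sqrt (S * (n * (l * t))) ≤ S + n * (l * t) := by
    nlinarith [sq_nonneg (Real.sqrt S - Real.sqrt (n * (l * t))),
      Real.sq_sqrt hS0, Real.sq_sqrt (by positivity : (0:ℝ) ≤ n * (l * t)),
      Real.sqrt_mul_self hS0,
      Real.sqrt_mul hS0 (n * (l * t)), Real.sqrt_nonneg (S * (n * (l * t)))]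
  have hrhs : Real.sqrt (S * n) * Real.sqrt (4 * l * t / (l + t) ^ 2)
      = 2 * Real.sqrt (S * (n * (l * t))) / (l + t) := by
    have h1 : 4 * l * t / (l + t) ^ 2 = (2 * Real.sqrt (l * t) / (l + t))^2 := by
      rw [div_pow, mul_pow, Real.sq_sqrt (by positivity : (0:ℝ) ≤ l * t)]
      ring
    have h2 : Real.sqrt (S * (n * (l * t))) = Real.sqrt (S * n) * Real.sqrt (l * t) := by
      rw [← Real.sqrt_mul (by positivity : (0:ℝ) ≤ S * n)]
      congr 1
      ring
    rw [h1, Real.sqrt_sq (by positivity), h2]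
    ring
  have hcast : (2 * (G.edgeFinset.card : ℝ) * (Fintype.card V : ℝ)) = S * n := by
    rw [hS, hn]
  rw [ge_iff_le, hcast, hrhs, div_le_iff₀ hlt0]
  calc 2 * Real.sqrt (S * (n * (l * t))) ≤ S + n * (l * t) := hamgm
  _ ≤ (l + t) * E := hkey
  _ = E * (l + t) := by ring
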